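/- For every s ∈ [0,10] \ {2,5}, the derivative C′ of C satisfies C′(s) = β₀(s) + (4/5)·(s/5 − 1)·ln( |(2·√(s²/4 − s + 5) + (3/5)·s + 2) / (4·√(s²/5 − 2s + 5) + 8·(s/5 − 1))| ) + ((s − 2)/4)·ln( |(2·√(s²/2 − 2s + 2) + s − 2) / (2·√(s²/4 − s + 5) − 4)| ). -/

import Mathlib

/-- The cost `C(s)` (under the Euclidean 2-norm) of the optimal monotone matching
candidate `γ_s` for the curves `P = ⟨(4,−2),(1,2),(1,−4)⟩`, `Q = ⟨(0,0),(5,0)⟩`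
whose parameter-space path follows the first cell's valley up to `ℓ¹`-parameter `s`. -/
noncomputable def C (s : ℝ) : ℝ :=
  2 / Real.sqrt 5 * (∫ t in (0:ℝ)..s, |t - 5|)
  + 1 / Real.sqrt 2 * (∫ t in (s + 6)..(16:ℝ), |t - 8|)
  + (∫ t in s..(s / 2 + 5), Real.sqrt (t ^ 2 - (2 * s / 5 + 8) * t + (s ^ 2 / 5 + 20)))
  + (∫ t in (s / 2 + 5)..(s + 6),
      Real.sqrt (t ^ 2 - (s + 14) * t + (s ^ 2 / 2 + 6 * s + 50)))

/-- `β₀(s) = (3/10)·√(s²/4 − s + 5) + (2/(5√5))·|s − 5| − (1/(2√2))·|s − 2|`. -/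
noncomputable def beta0 (s : ℝ) : ℝ :=
  3 / 10 * Real.sqrt (s ^ 2 / 4 - s + 5)
    + 2 / (5 * Real.sqrt 5) * |s - 5| - 1 / (2 * Real.sqrt 2) * |s - 2|

open Real intervalIntegral

lemma hasDerivAt_mul_abs (a : ℝ) : HasDerivAt (fun x : ℝ => x * |x|) (2 * |a|) a := by
  rcases lt_trichotomy a 0 with h | h | h
  · have h2 : HasDerivAt (fun x : ℝ => -(x * x)) (2 * |a|) a := by
      have := ((hasDerivAt_id a).mul (hasDerivAt_id a)).neg
      refine this.congr_deriv (Eq.symm ?_)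
      simp only [id]
      rw [abs_of_neg h]; ring
    refine h2.congr_of_eventuallyEq ?_
    filter_upwards [eventually_lt_nhds h] with x hx
    rw [abs_of_neg hx]; ring
  · subst h
    rw [hasDerivAt_iff_tendsto_slope]
    have he : (slope (fun x : ℝ => x * |x|) 0) =ᶠ[nhdsWithin 0 {(0:ℝ)}ᶜ] fun x => |x| := by
      filter_upwards [self_mem_nhdsWithin] with x hx
      simp only [Set.mem_compl_iff, Set.mem_singleton_iff] at hx
      rw [slope_def_field]
      field_simp
      ring
    have h0 : Filter.Tendsto (fun x : ℝ => |x|) (nhdsWithin 0 {(0:ℝ)}ᶜ) (nhds (2 * |(0:ℝ)|)) := by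
      simp only [abs_zero, mul_zero]
      exact (continuous_abs.tendsto' 0 0 abs_zero).mono_left nhdsWithin_le_nhds
    exact Filter.Tendsto.congr' he.symm h0
  · have h2 : HasDerivAt (fun x : ℝ => x * x) (2 * |a|) a := by
      have := (hasDerivAt_id a).mul (hasDerivAt_id a)
      refine this.congr_deriv (Eq.symm ?_)
      simp only [id]
      rw [abs_of_pos h]; ring
    refine h2.congr_of_eventuallyEq ?_
    filter_upwards [eventually_gt_nhds h] with x hx
    rw [abs_of_pos hx]

lemma integral_abs_sub (c x y : ℝ) :
    ∫ t in x..y, |t - c| = ((y - c) * |y - c| - (x - c) * |x - c|) / 2 := by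
  have h : ∀ t : ℝ, HasDerivAt (fun u : ℝ => (u - c) * |u - c| / 2) |t - c| t := by
    intro t
    have h1 : HasDerivAt (fun u : ℝ => u - c) 1 t := (hasDerivAt_id t).sub_const c
    have h2 := ((hasDerivAt_mul_abs (t - c)).comp t h1).div_const 2
    refine h2.congr_deriv (Eq.symm ?_)
    ring
  have hint : IntervalIntegrable (fun t => |t - c|) MeasureTheory.volume x y :=
    (continuous_abs.comp (continuous_id.sub continuous_const)).intervalIntegrable x y
  have := integral_eq_sub_of_hasDerivAt (fun t _ => h t) hint
  rw [this]; ring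

/-- Antiderivative of `u ↦ √(u² + c)` for `c > 0`. -/
noncomputable def Phi (c u : ℝ) : ℝ :=
  (u * Real.sqrt (u ^ 2 + c) + c * Real.log (u + Real.sqrt (u ^ 2 + c))) / 2

lemma sqrt_sq_add_pos {u c : ℝ} (hc : 0 < c) : 0 < Real.sqrt (u ^ 2 + c) :=
  Real.sqrt_pos.2 (by positivity)

lemma add_sqrt_pos (u : ℝ) {c : ℝ} (hc : 0 < c) : 0 < u + Real.sqrt (u ^ 2 + c) := by
  have h1 : |u| < Real.sqrt (u ^ 2 + c) := by
    rw [← Real.sqrt_sq_eq_abs]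
    exact Real.sqrt_lt_sqrt (sq_nonneg u) (by linarith)
  have := neg_abs_le u
  linarith

lemma hasDerivAt_Phi {c : ℝ} (hc : 0 < c) (u : ℝ) :
    HasDerivAt (Phi c) (Real.sqrt (u ^ 2 + c)) u := by
  set S := Real.sqrt (u ^ 2 + c) with hS
  have hS0 : 0 < S := sqrt_sq_add_pos hc
  have hSsq : S ^ 2 = u ^ 2 + c := Real.sq_sqrt (by positivity)
  have huS : 0 < u + S := add_sqrt_pos u hc
  have hsq : HasDerivAt (fun u : ℝ => Real.sqrt (u ^ 2 + c)) (u / S) u := by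
    have h1 : HasDerivAt (fun u : ℝ => u ^ 2 + c) (2 * u) u := by
      simpa using ((hasDerivAt_pow 2 u).add_const c)
    have := (Real.hasDerivAt_sqrt (show u ^ 2 + c ≠ 0 by positivity)).comp u h1
    refine this.congr_deriv (Eq.symm ?_)
    rw [← hS]; field_simp
  have hmul : HasDerivAt (fun u : ℝ => u * Real.sqrt (u ^ 2 + c)) (S + u * (u / S)) u := by
    exact ((hasDerivAt_id u).mul hsq).congr_deriv (by simp [hS])
  have hlog : HasDerivAt (fun u : ℝ => Real.log (u + Real.sqrt (u ^ 2 + c)))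
      ((1 + u / S) / (u + S)) u := by
    have hadd : HasDerivAt (fun u : ℝ => u + Real.sqrt (u ^ 2 + c)) (1 + u / S) u :=
      (hasDerivAt_id u).add hsq
    exact hadd.log (ne_of_gt huS)
  have := (hmul.add ((hlog.const_mul c))).div_const 2
  refine this.congr_deriv (Eq.symm ?_)
  have h1 : (1 + u / S) / (u + S) = 1 / S := by
    rw [div_eq_div_iff (ne_of_gt huS) (ne_of_gt hS0)]
    field_simp
    nlinarith [hSsq]
  rw [h1]
  field_simp
  nlinarith [hSsq]

lemma integral_sqrt_quad (m c x y : ℝ) (hc : 0 < c) :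
    ∫ t in x..y, Real.sqrt ((t - m) ^ 2 + c) = Phi c (y - m) - Phi c (x - m) := by
  have h : ∀ t : ℝ, HasDerivAt (fun u : ℝ => Phi c (u - m)) (Real.sqrt ((t - m) ^ 2 + c)) t := by
    intro t
    have h1 : HasDerivAt (fun u : ℝ => u - m) 1 t := (hasDerivAt_id t).sub_const m
    have := (hasDerivAt_Phi hc (t - m)).comp t h1
    exact this.congr_deriv (mul_one _)
  have hcont : Continuous fun t : ℝ => Real.sqrt ((t - m) ^ 2 + c) :=
    Real.continuous_sqrt.comp (by continuity)
  exact intervalIntegral.integral_eq_sub_of_hasDerivAt (fun t _ => h t)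
    (hcont.intervalIntegrable x y)

lemma hasDerivAt_Phi_comp {c v : ℝ → ℝ} {c' v' : ℝ} {s : ℝ}
    (hc : HasDerivAt c c' s) (hv : HasDerivAt v v' s) (hcs : 0 < c s) :
    HasDerivAt (fun x => Phi (c x) (v x))
      (v' * Real.sqrt ((v s) ^ 2 + c s)
        + c' * (Real.log (v s + Real.sqrt ((v s) ^ 2 + c s)) / 2 + 1 / 4)) s := by
  set S := Real.sqrt ((v s) ^ 2 + c s) with hSdef
  have hS0 : 0 < S := sqrt_sq_add_pos hcs
  have hSsq : S ^ 2 = (v s) ^ 2 + c s := Real.sq_sqrt (by positivity)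
  have hvS : 0 < v s + S := add_sqrt_pos _ hcs
  have hq : HasDerivAt (fun x => (v x) ^ 2 + c x) (2 * v s * v' + c') s := by
    have := (hv.pow 2).add hc
    refine this.congr_deriv (Eq.symm ?_)
    simp
  have hsq : HasDerivAt (fun x => Real.sqrt ((v x) ^ 2 + c x))
      ((2 * v s * v' + c') / (2 * S)) s := by
    have := (Real.hasDerivAt_sqrt (show (v s) ^ 2 + c s ≠ 0 by positivity)).comp s hq
    refine this.congr_deriv (Eq.symm ?_)
    rw [← hSdef]
    field_simp
  have hmul : HasDerivAt (fun x => v x * Real.sqrt ((v x) ^ 2 + c x))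
      (v' * S + v s * ((2 * v s * v' + c') / (2 * S))) s := hv.mul hsq
  have hlog : HasDerivAt (fun x => Real.log (v x + Real.sqrt ((v x) ^ 2 + c x)))
      ((v' + (2 * v s * v' + c') / (2 * S)) / (v s + S)) s := (hv.add hsq).log hvS.ne'
  have hclog := hc.mul hlog
  have htot := (hmul.add hclog).div_const 2
  have hfun : (fun x => Phi (c x) (v x))
      = fun x => (v x * Real.sqrt ((v x) ^ 2 + c x)
          + c x * Real.log (v x + Real.sqrt ((v x) ^ 2 + c x))) / 2 := rfl
  rw [hfun]
  refine htot.congr_deriv (Eq.symm ?_)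
  have hc2 : c s = S ^ 2 - (v s) ^ 2 := by linarith
  rw [hc2]
  have hvS' : v s + S ≠ 0 := hvS.ne'
  field_simp
  rw [show v s ^ 2 + (S ^ 2 - v s ^ 2) = S ^ 2 by ring, Real.sqrt_sq hS0.le]
  ring

/-- Closed form of `C` away from `s = 2` and `s = 5`. -/
noncomputable def Gc (s : ℝ) : ℝ :=
  2 / Real.sqrt 5 * (((s - 5) * |s - 5| + 25) / 2)
  + 1 / Real.sqrt 2 * ((64 - (s - 2) * |s - 2|) / 2)
  + (Phi (4 * (s / 5 - 1) ^ 2) (3 * s / 10 + 1) - Phi (4 * (s / 5 - 1) ^ 2) (4 * s / 5 - 4))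
  + (Phi ((s - 2) ^ 2 / 4) (s / 2 - 1) - Phi ((s - 2) ^ 2 / 4) (-2))

set_option maxHeartbeats 1000000 in
lemma C_eq_Gc {s : ℝ} (hs2 : s ≠ 2) (hs5 : s ≠ 5) : C s = Gc s := by
  have h51 : s / 5 - 1 ≠ 0 := fun h => hs5 (by linarith)
  have h2' : s - 2 ≠ 0 := sub_ne_zero.2 hs2
  have hc3 : (0:ℝ) < 4 * (s / 5 - 1) ^ 2 := by positivity
  have hc4 : (0:ℝ) < (s - 2) ^ 2 / 4 := by positivity
  have h3 : (∫ t in s..(s / 2 + 5),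
        Real.sqrt (t ^ 2 - (2 * s / 5 + 8) * t + (s ^ 2 / 5 + 20)))
      = ∫ t in s..(s / 2 + 5), Real.sqrt ((t - (s / 5 + 4)) ^ 2 + 4 * (s / 5 - 1) ^ 2) := by
    apply intervalIntegral.integral_congr
    intro t _
    ring_nf
  have h4 : (∫ t in (s / 2 + 5)..(s + 6),
        Real.sqrt (t ^ 2 - (s + 14) * t + (s ^ 2 / 2 + 6 * s + 50)))
      = ∫ t in (s / 2 + 5)..(s + 6), Real.sqrt ((t - (s / 2 + 7)) ^ 2 + (s - 2) ^ 2 / 4) := by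
    apply intervalIntegral.integral_congr
    intro t _
    ring_nf
  unfold C Gc
  rw [integral_abs_sub 5 0 s, integral_abs_sub 8 (s + 6) 16, h3, h4,
    integral_sqrt_quad _ _ _ _ hc3, integral_sqrt_quad _ _ _ _ hc4,
    show s / 2 + 5 - (s / 5 + 4) = 3 * s / 10 + 1 from by ring,
    show s - (s / 5 + 4) = 4 * s / 5 - 4 from by ring,
    show s + 6 - (s / 2 + 7) = s / 2 - 1 from by ring,
    show s / 2 + 5 - (s / 2 + 7) = (-2 : ℝ) from by ring,
    show s + 6 - 8 = s - 2 from by ring,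
    show (0:ℝ) - 5 = -5 from by ring,
    show (16:ℝ) - 8 = 8 from by ring]
  norm_num

set_option maxHeartbeats 1000000 in
/-- For every `s ∈ [0,10] \ {2,5}` the derivative of `C` equals
`β₀(s)` plus the stated linear combination of logarithms. -/
theorem derivWithin_C_log_form (s : ℝ) (hs : s ∈ Set.Icc (0 : ℝ) 10)
    (hs2 : s ≠ 2) (hs5 : s ≠ 5) :
    derivWithin C (Set.Icc (0 : ℝ) 10) s
      = beta0 s
        + 4 / 5 * (s / 5 - 1) *
            Real.log |(2 * Real.sqrt (s ^ 2 / 4 - s + 5) + 3 / 5 * s + 2)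
              / (4 * Real.sqrt (s ^ 2 / 5 - 2 * s + 5) + 8 * (s / 5 - 1))|
        + (s - 2) / 4 *
            Real.log |(2 * Real.sqrt (s ^ 2 / 2 - 2 * s + 2) + s - 2)
              / (2 * Real.sqrt (s ^ 2 / 4 - s + 5) - 4)| := by
  have h51 : s / 5 - 1 ≠ 0 := fun h => hs5 (by linarith)
  have h2' : s - 2 ≠ 0 := sub_ne_zero.2 hs2
  have hpos3 : (0:ℝ) < 4 * (s / 5 - 1) ^ 2 := by positivity
  have hpos4 : (0:ℝ) < (s - 2) ^ 2 / 4 := by positivity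
  -- derivatives of inner functions
  have hc3 : HasDerivAt (fun x : ℝ => 4 * (x / 5 - 1) ^ 2) (8 * (s / 5 - 1) / 5) s := by
    have := ((((hasDerivAt_id s).div_const 5).sub_const 1).pow 2).const_mul (4:ℝ)
    refine this.congr_deriv (Eq.symm ?_)
    simp
    ring
  have hc4 : HasDerivAt (fun x : ℝ => (x - 2) ^ 2 / 4) ((s - 2) / 2) s := by
    have := (((hasDerivAt_id s).sub_const 2).pow 2).div_const (4:ℝ)
    refine this.congr_deriv (Eq.symm ?_)
    simp
    ring
  have hv3 : HasDerivAt (fun x : ℝ => 3 * x / 10 + 1) (3 / 10) s := by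
    have := ((((hasDerivAt_id s).const_mul 3).div_const 10).add_const 1)
    refine this.congr_deriv (Eq.symm ?_)
    norm_num
  have hu3 : HasDerivAt (fun x : ℝ => 4 * x / 5 - 4) (4 / 5) s := by
    have := ((((hasDerivAt_id s).const_mul 4).div_const 5).sub_const 4)
    refine this.congr_deriv (Eq.symm ?_)
    norm_num
  have hv4 : HasDerivAt (fun x : ℝ => x / 2 - 1) (1 / 2) s := by
    have := ((hasDerivAt_id s).div_const 2).sub_const 1
    exact this
  have hu4 : HasDerivAt (fun _ : ℝ => (-2 : ℝ)) 0 s := hasDerivAt_const s (-2)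
  -- derivatives of the six summands of Gc
  have hg1 : HasDerivAt (fun x : ℝ => 2 / Real.sqrt 5 * (((x - 5) * |x - 5| + 25) / 2))
      (2 / Real.sqrt 5 * |s - 5|) s := by
    have h1 : HasDerivAt (fun x : ℝ => x - 5) 1 s := (hasDerivAt_id s).sub_const 5
    have := ((((hasDerivAt_mul_abs (s - 5)).comp s h1).add_const 25).div_const 2).const_mul
      (2 / Real.sqrt 5)
    refine this.congr_deriv (Eq.symm ?_)
    ring
  have hg2 : HasDerivAt (fun x : ℝ => 1 / Real.sqrt 2 * ((64 - (x - 2) * |x - 2|) / 2))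
      (-(1 / Real.sqrt 2) * |s - 2|) s := by
    have h1 : HasDerivAt (fun x : ℝ => x - 2) 1 s := (hasDerivAt_id s).sub_const 2
    have := ((((hasDerivAt_mul_abs (s - 2)).comp s h1).const_sub 64).div_const 2).const_mul
      (1 / Real.sqrt 2)
    refine this.congr_deriv (Eq.symm ?_)
    ring
  have hg3 := hasDerivAt_Phi_comp hc3 hv3 hpos3
  have hg4 := hasDerivAt_Phi_comp hc3 hu3 hpos3
  have hg5 := hasDerivAt_Phi_comp hc4 hv4 hpos4
  have hg6 := hasDerivAt_Phi_comp hc4 hu4 hpos4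
  have hG : HasDerivAt Gc
      (2 / Real.sqrt 5 * |s - 5| + -(1 / Real.sqrt 2) * |s - 2|
        + ((3 / 10 * Real.sqrt ((3 * s / 10 + 1) ^ 2 + 4 * (s / 5 - 1) ^ 2)
            + 8 * (s / 5 - 1) / 5 *
              (Real.log (3 * s / 10 + 1 + Real.sqrt ((3 * s / 10 + 1) ^ 2 + 4 * (s / 5 - 1) ^ 2)) / 2 + 1 / 4))
          - (4 / 5 * Real.sqrt ((4 * s / 5 - 4) ^ 2 + 4 * (s / 5 - 1) ^ 2)
            + 8 * (s / 5 - 1) / 5 *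
              (Real.log (4 * s / 5 - 4 + Real.sqrt ((4 * s / 5 - 4) ^ 2 + 4 * (s / 5 - 1) ^ 2)) / 2 + 1 / 4)))
        + ((1 / 2 * Real.sqrt ((s / 2 - 1) ^ 2 + (s - 2) ^ 2 / 4)
            + (s - 2) / 2 *
              (Real.log (s / 2 - 1 + Real.sqrt ((s / 2 - 1) ^ 2 + (s - 2) ^ 2 / 4)) / 2 + 1 / 4))
          - (0 * Real.sqrt ((-2 : ℝ) ^ 2 + (s - 2) ^ 2 / 4)
            + (s - 2) / 2 *
              (Real.log (-2 + Real.sqrt ((-2 : ℝ) ^ 2 + (s - 2) ^ 2 / 4)) / 2 + 1 / 4)))) s := by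
    unfold Gc
    exact ((hg1.add hg2).add (hg3.sub hg4)).add (hg5.sub hg6)
  -- sqrt simplifications
  have e3a : (3 * s / 10 + 1) ^ 2 + 4 * (s / 5 - 1) ^ 2 = s ^ 2 / 4 - s + 5 := by ring
  have e3b : (4 * s / 5 - 4) ^ 2 + 4 * (s / 5 - 1) ^ 2 = (2 * (s - 5)) ^ 2 / 5 := by ring
  have e4a : (s / 2 - 1) ^ 2 + (s - 2) ^ 2 / 4 = (s - 2) ^ 2 / 2 := by ring
  have e4b : ((-2 : ℝ)) ^ 2 + (s - 2) ^ 2 / 4 = s ^ 2 / 4 - s + 5 := by ring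
  have hsA : Real.sqrt ((2 * (s - 5)) ^ 2 / 5) = 2 * |s - 5| / Real.sqrt 5 := by
    rw [Real.sqrt_div (sq_nonneg _), Real.sqrt_sq_eq_abs, abs_mul]
    norm_num
  have hsB : Real.sqrt ((s - 2) ^ 2 / 2) = |s - 2| / Real.sqrt 2 := by
    rw [Real.sqrt_div (sq_nonneg _), Real.sqrt_sq_eq_abs]
  have hsA' : Real.sqrt (s ^ 2 / 5 - 2 * s + 5) = |s - 5| / Real.sqrt 5 := by
    rw [show s ^ 2 / 5 - 2 * s + 5 = (s - 5) ^ 2 / 5 from by ring,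
      Real.sqrt_div (sq_nonneg _), Real.sqrt_sq_eq_abs]
  have hsB' : Real.sqrt (s ^ 2 / 2 - 2 * s + 2) = |s - 2| / Real.sqrt 2 := by
    rw [show s ^ 2 / 2 - 2 * s + 2 = (s - 2) ^ 2 / 2 from by ring]
    exact hsB
  -- positivity of log arguments
  have hN1 : 0 < 3 * s / 10 + 1 + Real.sqrt (s ^ 2 / 4 - s + 5) := by
    have := add_sqrt_pos (3 * s / 10 + 1) hpos3; rwa [e3a] at this
  have hM1 : 0 < 4 * s / 5 - 4 + 2 * |s - 5| / Real.sqrt 5 := by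
    have := add_sqrt_pos (4 * s / 5 - 4) hpos3; rwa [e3b, hsA] at this
  have hN2 : 0 < s / 2 - 1 + |s - 2| / Real.sqrt 2 := by
    have := add_sqrt_pos (s / 2 - 1) hpos4; rwa [e4a, hsB] at this
  have hM2 : 0 < -2 + Real.sqrt (s ^ 2 / 4 - s + 5) := by
    have := add_sqrt_pos (-2 : ℝ) hpos4; rwa [e4b] at this
  -- pass from C to Gc
  have hmem : {x : ℝ | x ≠ 2 ∧ x ≠ 5} ∈ nhds s := by
    have ho : IsOpen {x : ℝ | x ≠ 2 ∧ x ≠ 5} := (isOpen_ne (x := (2:ℝ))).and (isOpen_ne (x := (5:ℝ)))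
    exact ho.mem_nhds ⟨hs2, hs5⟩
  have hev : C =ᶠ[nhdsWithin s (Set.Icc (0 : ℝ) 10)] Gc := by
    filter_upwards [nhdsWithin_le_nhds hmem] with x hx
    exact C_eq_Gc hx.1 hx.2
  rw [hev.derivWithin_eq (C_eq_Gc hs2 hs5),
    hG.differentiableAt.derivWithin ((uniqueDiffOn_Icc (by norm_num : (0:ℝ) < 10)) s hs),
    hG.deriv, e3a, e3b, e4a, e4b, hsA, hsB, hsA', hsB']
  rw [show 2 * Real.sqrt (s ^ 2 / 4 - s + 5) + 3 / 5 * s + 2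
        = 2 * (3 * s / 10 + 1 + Real.sqrt (s ^ 2 / 4 - s + 5)) from by ring,
    show 4 * (|s - 5| / Real.sqrt 5) + 8 * (s / 5 - 1)
        = 2 * (4 * s / 5 - 4 + 2 * |s - 5| / Real.sqrt 5) from by ring,
    mul_div_mul_left _ _ (two_ne_zero),
    abs_of_pos (div_pos hN1 hM1),
    Real.log_div hN1.ne' hM1.ne',
    show 2 * (|s - 2| / Real.sqrt 2) + s - 2
        = 2 * (s / 2 - 1 + |s - 2| / Real.sqrt 2) from by ring,
    show 2 * Real.sqrt (s ^ 2 / 4 - s + 5) - 4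
        = 2 * (-2 + Real.sqrt (s ^ 2 / 4 - s + 5)) from by ring,
    mul_div_mul_left _ _ (two_ne_zero),
    abs_of_pos (div_pos hN2 hM2),
    Real.log_div hN2.ne' hM2.ne']
  unfold beta0
  have h5 : Real.sqrt 5 ≠ 0 := by positivity
  have h2 : Real.sqrt 2 ≠ 0 := by positivity
  field_simp
  ring
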